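/- For every x ∈ ℝ, (1/π) ∫₀^∞ (θ(x−γ) − θ(x+γ) − θ(−γ) + θ(γ))/γ dγ = (1/2) ln(x² + 1); that is, the Hilbert-transform difference Hθ(x) − Hθ(0) equals (1/2) ln(x²+1). -/

import Mathlib

open MeasureTheory Real Filter Set Topology

/-- `θ(x)`: the continuous branch of `arg (x − i)`, i.e. `arctan(−1/x)` for `x > 0`,
`arctan(−1/x) − π` for `x < 0`, and `−π/2` at `x = 0`. -/
noncomputable def theta (x : ℝ) : ℝ :=
  if x = 0 then -(Real.pi / 2)
  else if x < 0 then Real.arctan (-1 / x) - Real.pi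
  else Real.arctan (-1 / x)

lemma theta_eq (u : ℝ) : theta u = Real.arctan u - Real.pi / 2 := by
  unfold theta
  rcases lt_trichotomy u 0 with h | rfl | h
  · rw [if_neg h.ne, if_pos h, show (-1 : ℝ) / u = -(u⁻¹) by ring, Real.arctan_neg,
      Real.arctan_inv_of_neg h]
    ring
  · simp
  · rw [if_neg h.ne', if_neg (not_lt.mpr h.le), show (-1 : ℝ) / u = -(u⁻¹) by ring,
      Real.arctan_neg, Real.arctan_inv_of_pos h]
    ring


lemma inner_int {t : ℝ} (ht : 0 < t) :
    (∫ γ in Ioi (0:ℝ), 4 * t / ((1 + (γ - t) ^ 2) * (1 + (γ + t) ^ 2)))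
      = Real.pi * (t / (1 + t ^ 2)) := by
  set Φ : ℝ → ℝ := fun γ => t / (1 + t ^ 2) * (Real.arctan (γ - t) + Real.arctan (γ + t))
      + 1 / (2 * (1 + t ^ 2)) * (Real.log (1 + (γ + t) ^ 2) - Real.log (1 + (γ - t) ^ 2)) with hΦ
  have ht2 : (0:ℝ) < 1 + t ^ 2 := by positivity
  have hderiv : ∀ γ : ℝ, HasDerivAt Φ (4 * t / ((1 + (γ - t) ^ 2) * (1 + (γ + t) ^ 2))) γ := by
    intro γ
    have hA : (0:ℝ) < 1 + (γ - t) ^ 2 := by positivity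
    have hB : (0:ℝ) < 1 + (γ + t) ^ 2 := by positivity
    have h1 : HasDerivAt (fun γ : ℝ => Real.arctan (γ - t)) (1 / (1 + (γ - t) ^ 2)) γ := by
      simpa [Function.comp_def] using (Real.hasDerivAt_arctan (γ - t)).comp γ ((hasDerivAt_id γ).sub_const t)
    have h2 : HasDerivAt (fun γ : ℝ => Real.arctan (γ + t)) (1 / (1 + (γ + t) ^ 2)) γ := by
      simpa [Function.comp_def] using (Real.hasDerivAt_arctan (γ + t)).comp γ ((hasDerivAt_id γ).add_const t)
    have h3 : HasDerivAt (fun γ : ℝ => Real.log (1 + (γ + t) ^ 2))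
        (2 * (γ + t) / (1 + (γ + t) ^ 2)) γ := by
      have hin : HasDerivAt (fun γ : ℝ => 1 + (γ + t) ^ 2) (2 * (γ + t)) γ := by
        simpa using (((hasDerivAt_id γ).add_const t).pow 2).const_add (1:ℝ)
      simpa using hin.log hB.ne'
    have h4 : HasDerivAt (fun γ : ℝ => Real.log (1 + (γ - t) ^ 2))
        (2 * (γ - t) / (1 + (γ - t) ^ 2)) γ := by
      have hin : HasDerivAt (fun γ : ℝ => 1 + (γ - t) ^ 2) (2 * (γ - t)) γ := by
        simpa using (((hasDerivAt_id γ).sub_const t).pow 2).const_add (1:ℝ)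
      simpa using hin.log hA.ne'
    have := ((h1.add h2).const_mul (t / (1 + t ^ 2))).add
      ((h3.sub h4).const_mul (1 / (2 * (1 + t ^ 2))))
    refine this.congr_deriv ?_
    field_simp
    ring
  have hnonneg : ∀ γ ∈ Ioi (0:ℝ), 0 ≤ 4 * t / ((1 + (γ - t) ^ 2) * (1 + (γ + t) ^ 2)) := by
    intro γ _; positivity
  have htend : Tendsto Φ atTop (𝓝 (Real.pi * (t / (1 + t ^ 2)))) := by
    have harct : Tendsto (fun γ : ℝ => Real.arctan (γ - t) + Real.arctan (γ + t)) atTop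
        (𝓝 (Real.pi / 2 + Real.pi / 2)) := by
      have hT : Tendsto Real.arctan atTop (𝓝 (Real.pi / 2)) :=
        tendsto_nhds_of_tendsto_nhdsWithin Real.tendsto_arctan_atTop
      exact (hT.comp (tendsto_atTop_add_const_right _ (-t) tendsto_id)).add
        (hT.comp (tendsto_atTop_add_const_right _ t tendsto_id))
    have hlog : Tendsto (fun γ : ℝ => Real.log (1 + (γ + t) ^ 2) - Real.log (1 + (γ - t) ^ 2))
        atTop (𝓝 0) := by
      have hr : Tendsto (fun γ : ℝ => (1 + (γ + t) ^ 2) / (1 + (γ - t) ^ 2)) atTop (𝓝 1) := by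
        have haux : Tendsto (fun γ : ℝ =>
            (γ⁻¹ ^ 2 + (1 + t * γ⁻¹) ^ 2) / (γ⁻¹ ^ 2 + (1 - t * γ⁻¹) ^ 2)) atTop (𝓝 1) := by
          have hz : Tendsto (fun γ : ℝ => γ⁻¹) atTop (𝓝 0) := tendsto_inv_atTop_zero
          have hnum : Tendsto (fun γ : ℝ => γ⁻¹ ^ 2 + (1 + t * γ⁻¹) ^ 2) atTop (𝓝 1) := by
            have := ((hz.pow 2).add (((hz.const_mul t).const_add 1).pow 2))
            simpa using this
          have hden : Tendsto (fun γ : ℝ => γ⁻¹ ^ 2 + (1 - t * γ⁻¹) ^ 2) atTop (𝓝 1) := by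
            have := ((hz.pow 2).add ((((hz.const_mul t).neg).const_add 1).pow 2))
            simpa [sub_eq_add_neg] using this
          have := hnum.div hden one_ne_zero; rwa [div_one] at this
        refine haux.congr' ?_
        filter_upwards [eventually_gt_atTop (0:ℝ)] with γ hγ
        have hA : (0:ℝ) < 1 + (γ - t) ^ 2 := by positivity
        field_simp
        try ring
      have := ((Real.continuousAt_log one_ne_zero).tendsto).comp hr
      simp only [Real.log_one] at this
      refine this.congr fun γ => ?_
      have hA : (0:ℝ) < 1 + (γ - t) ^ 2 := by positivity
      have hB : (0:ℝ) < 1 + (γ + t) ^ 2 := by positivity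
      rw [Function.comp_apply, Real.log_div hB.ne' hA.ne']
    have := (harct.const_mul (t / (1 + t ^ 2))).add (hlog.const_mul (1 / (2 * (1 + t ^ 2))))
    convert this using 2
    ring
  have h0 : Φ 0 = 0 := by
    simp only [hΦ]
    rw [show (0:ℝ) - t = -t by ring, show (0:ℝ) + t = t by ring, Real.arctan_neg]
    ring_nf
  rw [integral_Ioi_of_hasDerivAt_of_nonneg (hderiv 0).continuousAt.continuousWithinAt
    (fun γ _ => hderiv γ) hnonneg htend, h0, sub_zero]


lemma contF : Continuous (fun p : ℝ × ℝ => 4 * p.2 / ((1 + (p.1 - p.2) ^ 2) * (1 + (p.1 + p.2) ^ 2))) := by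
  apply Continuous.div (by continuity) (by continuity)
  intro p
  positivity

lemma rep (x : ℝ) {γ : ℝ} (hγ : 0 < γ) :
    (Real.arctan (x - γ) - Real.arctan (x + γ) + 2 * Real.arctan γ) / γ
      = ∫ t in (0:ℝ)..x, 4 * t / ((1 + (γ - t) ^ 2) * (1 + (γ + t) ^ 2)) := by
  have key : ∀ t : ℝ, HasDerivAt
      (fun s : ℝ => (Real.arctan (s - γ) - Real.arctan (s + γ) + 2 * Real.arctan γ) / γ)
      (4 * t / ((1 + (γ - t) ^ 2) * (1 + (γ + t) ^ 2))) t := by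
    intro t
    have hA : (0:ℝ) < 1 + (t - γ) ^ 2 := by positivity
    have hB : (0:ℝ) < 1 + (t + γ) ^ 2 := by positivity
    have h1 : HasDerivAt (fun s : ℝ => Real.arctan (s - γ)) (1 / (1 + (t - γ) ^ 2)) t := by
      simpa [Function.comp_def] using (Real.hasDerivAt_arctan (t - γ)).comp t ((hasDerivAt_id t).sub_const γ)
    have h2 : HasDerivAt (fun s : ℝ => Real.arctan (s + γ)) (1 / (1 + (t + γ) ^ 2)) t := by
      simpa [Function.comp_def] using (Real.hasDerivAt_arctan (t + γ)).comp t ((hasDerivAt_id t).add_const γ)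
    have := ((h1.sub h2).add_const (2 * Real.arctan γ)).div_const γ
    refine this.congr_deriv ?_
    rw [show (1:ℝ) + (γ - t) ^ 2 = 1 + (t - γ) ^ 2 by ring,
      show (1:ℝ) + (γ + t) ^ 2 = 1 + (t + γ) ^ 2 by ring]
    field_simp
    ring
  have hint : IntervalIntegrable (fun t => 4 * t / ((1 + (γ - t) ^ 2) * (1 + (γ + t) ^ 2)))
      volume 0 x := by
    apply Continuous.intervalIntegrable
    exact contF.comp (by continuity : Continuous fun t : ℝ => ((γ, t) : ℝ × ℝ))
  rw [intervalIntegral.integral_eq_sub_of_hasDerivAt (fun t _ => key t) hint]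
  rw [show (0:ℝ) - γ = -γ by ring, show (0:ℝ) + γ = γ by ring, Real.arctan_neg]
  ring

lemma Pbound {γ t : ℝ} : 1 + γ ^ 2 ≤ (1 + (γ - t) ^ 2) * (1 + (γ + t) ^ 2) := by
  nlinarith [sq_nonneg (γ - t), sq_nonneg (γ + t), sq_nonneg t, sq_nonneg ((γ-t)*(γ+t)), sq_nonneg γ]

lemma main_nonneg {x : ℝ} (hx : 0 ≤ x) :
    (∫ γ in Ioi (0:ℝ),
        (Real.arctan (x - γ) - Real.arctan (x + γ) + 2 * Real.arctan γ) / γ)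
      = Real.pi * (1 / 2 * Real.log (x ^ 2 + 1)) := by
  set F : ℝ → ℝ → ℝ := fun γ t => 4 * t / ((1 + (γ - t) ^ 2) * (1 + (γ + t) ^ 2)) with hF
  have hFc : Continuous (Function.uncurry F) := contF
  -- integrability on the product
  have hmeas : AEStronglyMeasurable (Function.uncurry F)
      ((volume.restrict (Ioi (0:ℝ))).prod (volume.restrict (Ioc (0:ℝ) x))) :=
    hFc.aestronglyMeasurable
  have hslice : ∀ γ : ℝ, IntegrableOn (fun t => F γ t) (Ioc (0:ℝ) x) volume := by
    intro γ
    exact (hFc.comp (by continuity : Continuous fun t : ℝ => ((γ, t) : ℝ × ℝ))).integrableOn_Ioc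
  have hprod : Integrable (Function.uncurry F)
      ((volume.restrict (Ioi (0:ℝ))).prod (volume.restrict (Ioc (0:ℝ) x))) := by
    rw [integrable_prod_iff hmeas]
    constructor
    · exact Filter.Eventually.of_forall fun γ => hslice γ
    · have hb : ∀ γ ∈ Ioi (0:ℝ),
          ‖∫ t in Ioc (0:ℝ) x, ‖F γ t‖‖ ≤ x * (4 * x / (1 + γ ^ 2)) := by
        intro γ hγ
        have hγ0 : (0:ℝ) < γ := hγ
        have hnn : 0 ≤ ∫ t in Ioc (0:ℝ) x, ‖F γ t‖ :=
          integral_nonneg fun t => norm_nonneg _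
        rw [Real.norm_eq_abs, abs_of_nonneg hnn]
        have hle : ∫ t in Ioc (0:ℝ) x, ‖F γ t‖
            ≤ ∫ _t in Ioc (0:ℝ) x, (4 * x / (1 + γ ^ 2)) := by
          apply setIntegral_mono_on ((hslice γ).norm) (integrableOn_const
            measure_Ioc_lt_top.ne) measurableSet_Ioc
          intro t htm
          have ht0 : 0 < t := htm.1
          have htx : t ≤ x := htm.2
          have hP : (0:ℝ) < 1 + γ ^ 2 := by positivity
          have hP2 : (0:ℝ) < (1 + (γ - t) ^ 2) * (1 + (γ + t) ^ 2) := by positivity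
          rw [hF, Real.norm_eq_abs, abs_of_nonneg (by positivity)]
          exact div_le_div₀ (by positivity) (by linarith) hP Pbound
        calc (∫ t in Ioc (0:ℝ) x, ‖F γ t‖) ≤ _ := hle
          _ = x * (4 * x / (1 + γ ^ 2)) := by
            rw [setIntegral_const, measureReal_def, Real.volume_Ioc, smul_eq_mul,
              ENNReal.toReal_ofReal (by linarith : (0:ℝ) ≤ x - 0)]
            ring_nf
      have hg : Integrable (fun γ : ℝ => x * (4 * x / (1 + γ ^ 2)))
          (volume.restrict (Ioi (0:ℝ))) := by
        have : Integrable (fun γ : ℝ => (4 * x * x) * (1 + γ ^ 2)⁻¹) volume :=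
          integrable_inv_one_add_sq.const_mul _
        exact (this.restrict (s := Ioi 0)).congr (Filter.Eventually.of_forall fun γ => by
          field_simp)
      refine hg.mono (hmeas.norm.integral_prod_right') ?_
      rw [ae_restrict_iff' measurableSet_Ioi]
      refine Filter.Eventually.of_forall fun γ hγ => ?_
      have := hb γ hγ
      calc ‖∫ t in Ioc (0:ℝ) x, ‖Function.uncurry F (γ, t)‖‖
          ≤ x * (4 * x / (1 + γ ^ 2)) := this
        _ ≤ ‖x * (4 * x / (1 + γ ^ 2))‖ := le_abs_self _
  -- main computation
  calc (∫ γ in Ioi (0:ℝ),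
        (Real.arctan (x - γ) - Real.arctan (x + γ) + 2 * Real.arctan γ) / γ)
      = ∫ γ in Ioi (0:ℝ), ∫ t in Ioc (0:ℝ) x, F γ t := by
        apply setIntegral_congr_fun measurableSet_Ioi
        intro γ hγ
        dsimp only
        rw [rep x hγ, intervalIntegral.integral_of_le hx]
    _ = ∫ t in Ioc (0:ℝ) x, ∫ γ in Ioi (0:ℝ), F γ t := integral_integral_swap hprod
    _ = ∫ t in Ioc (0:ℝ) x, Real.pi * (t / (1 + t ^ 2)) := by
        apply setIntegral_congr_fun measurableSet_Ioc
        intro t htm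
        exact inner_int htm.1
    _ = ∫ t in (0:ℝ)..x, Real.pi * (t / (1 + t ^ 2)) :=
        (intervalIntegral.integral_of_le hx).symm
    _ = Real.pi * (1 / 2 * Real.log (x ^ 2 + 1)) := by
        have key : ∀ t : ℝ, HasDerivAt (fun s : ℝ => Real.pi / 2 * Real.log (1 + s ^ 2))
            (Real.pi * (t / (1 + t ^ 2))) t := by
          intro t
          have hP : (0:ℝ) < 1 + t ^ 2 := by positivity
          have hin : HasDerivAt (fun s : ℝ => 1 + s ^ 2) (2 * t) t := by
            simpa using ((hasDerivAt_id t).pow 2).const_add (1:ℝ)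
          have := (hin.log hP.ne').const_mul (Real.pi / 2)
          refine this.congr_deriv ?_
          field_simp
        rw [intervalIntegral.integral_eq_sub_of_hasDerivAt (fun t _ => key t) (by
          apply Continuous.intervalIntegrable
          apply Continuous.mul continuous_const
          apply Continuous.div continuous_id (by continuity)
          intro t; positivity)]
        norm_num
        rw [show (1:ℝ) + x ^ 2 = x ^ 2 + 1 by ring]
        ring


/-- `Hθ(x) − Hθ(0) = (1/2) ln(x²+1)`, expressed via the convergent improper integral. -/
theorem statement16 :
    ∀ x : ℝ,
      (1 / Real.pi) * ∫ γ in Set.Ioi (0 : ℝ),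
          (theta (x - γ) - theta (x + γ) - theta (-γ) + theta γ) / γ
        = 1 / 2 * Real.log (x ^ 2 + 1) := by
  have key : ∀ x : ℝ,
      (∫ γ in Ioi (0:ℝ),
        (Real.arctan (x - γ) - Real.arctan (x + γ) + 2 * Real.arctan γ) / γ)
      = Real.pi * (1 / 2 * Real.log (x ^ 2 + 1)) := by
    intro x
    rcases le_or_gt 0 x with hx | hx
    · exact main_nonneg hx
    · have h2 := main_nonneg (x := -x) (by linarith)
      have hcong : ∀ γ : ℝ,
          (Real.arctan (-x - γ) - Real.arctan (-x + γ) + 2 * Real.arctan γ) / γ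
            = (Real.arctan (x - γ) - Real.arctan (x + γ) + 2 * Real.arctan γ) / γ := by
        intro γ
        rw [show -x - γ = -(x + γ) by ring, show -x + γ = -(x - γ) by ring,
          Real.arctan_neg, Real.arctan_neg]
        ring
      simp only [hcong] at h2
      rw [h2, show (-x) ^ 2 = x ^ 2 by ring]
  intro x
  have hsimp : ∀ γ ∈ Ioi (0:ℝ),
      (theta (x - γ) - theta (x + γ) - theta (-γ) + theta γ) / γ
        = (Real.arctan (x - γ) - Real.arctan (x + γ) + 2 * Real.arctan γ) / γ := by
    intro γ _
    simp only [theta_eq, Real.arctan_neg]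
    ring
  rw [setIntegral_congr_fun measurableSet_Ioi hsimp, key x]
  field_simp
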